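/- Let (X, μ) be a probability space, f ∈ L∞(X,μ)⁺, and for c ≥ essinf f define φ(c) = ∫_X (f(x) + (c − f(x))⁺) dμ(x). Then φ is continuous and strictly increasing on [essinf f, ∞), φ(essinf f) = ∫_X f dμ, and φ(c) → ∞ as c → ∞; consequently, for every w ≥ ∫_X f dμ there exists a unique c(w) ≥ essinf f with φ(c(w)) = w. -/

import Mathlib

open MeasureTheory Set Filter

/-- The water-filling total mass function `φ(c) = ∫ f + (c − f)⁺ dμ`. -/
noncomputable def waterPhi {X : Type*} [MeasurableSpace X] (μ : Measure X)
    (f : X → ℝ) (c : ℝ) : ℝ :=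
  ∫ x, (f x + max (c - f x) 0) ∂μ

theorem waterPhi_properties {X : Type*} [MeasurableSpace X]
    (μ : Measure X) [IsProbabilityMeasure μ] (f : X → ℝ) (hfm : Measurable f)
    (hf0 : ∀ᵐ x ∂μ, 0 ≤ f x) (hfb : ∃ C, ∀ᵐ x ∂μ, f x ≤ C) :
    ContinuousOn (waterPhi μ f) (Ici (essInf f μ)) ∧
    StrictMonoOn (waterPhi μ f) (Ici (essInf f μ)) ∧
    waterPhi μ f (essInf f μ) = ∫ x, f x ∂μ ∧
    Tendsto (waterPhi μ f) atTop atTop ∧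
    ∀ w, (∫ x, f x ∂μ) ≤ w → ∃! c, essInf f μ ≤ c ∧ waterPhi μ f c = w := by
  obtain ⟨C, hC⟩ := hfb
  -- rewrite waterPhi as ∫ max c (f x)
  have hrw : ∀ c, waterPhi μ f c = ∫ x, max c (f x) ∂μ := by
    intro c
    unfold waterPhi
    congr 1
    funext x
    rw [← max_add_add_left]
    simp
  have hbelow : IsBoundedUnder (· ≥ ·) (ae μ) f := ⟨0, by simpa [eventually_map] using hf0⟩
  have habove : IsBoundedUnder (· ≤ ·) (ae μ) f := ⟨C, by simpa [eventually_map] using hC⟩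
  -- integrability
  have hint : ∀ c, Integrable (fun x => max c (f x)) μ := by
    intro c
    apply (integrable_const (max |c| (max C 0))).mono'
      (measurable_const.max hfm).aestronglyMeasurable
    filter_upwards [hf0, hC] with x h0 h1
    rw [Real.norm_eq_abs, abs_le]
    constructor
    · have : (0:ℝ) ≤ max |c| (max C 0) := le_trans (abs_nonneg c) (le_max_left _ _)
      have h2 : -(max |c| (max C 0)) ≤ 0 := by linarith
      exact h2.trans (le_max_of_le_right h0)
    · exact max_le_max (le_abs_self c) (le_max_of_le_left h1)
  -- Lipschitz, hence continuous
  have hlip : LipschitzWith 1 (waterPhi μ f) := by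
    apply LipschitzWith.of_dist_le_mul
    intro c c'
    rw [hrw c, hrw c', NNReal.coe_one, one_mul, Real.dist_eq, Real.dist_eq,
      ← integral_sub (hint c) (hint c')]
    calc |∫ x, (max c (f x) - max c' (f x)) ∂μ|
        ≤ ∫ x, |max c (f x) - max c' (f x)| ∂μ := by
          simpa using norm_integral_le_integral_norm (fun x => max c (f x) - max c' (f x)) (μ := μ)
      _ ≤ ∫ _x, |c - c'| ∂μ := by
          apply integral_mono ((hint c).sub (hint c')).abs (integrable_const _)
          intro x
          exact abs_max_sub_max_le_abs c c' (f x)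
      _ = |c - c'| := by simp
  -- positive measure of sublevel sets above essInf
  have hpos : ∀ m, essInf f μ < m → μ {x | f x < m} ≠ 0 := by
    intro m hm h0
    have hae : ∀ᵐ x ∂μ, m ≤ f x := by
      rw [ae_iff]
      simpa [not_le] using h0
    have : m ≤ essInf f μ := by
      rw [essInf]
      exact le_liminf_of_le (habove.isCoboundedUnder_ge) (by simpa [eventually_map] using hae)
    linarith
  -- strict monotonicity
  have hmono : StrictMonoOn (waterPhi μ f) (Ici (essInf f μ)) := by
    intro c hc c' _ hlt
    rw [hrw, hrw]
    set m := (c + c') / 2 with hm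
    have hm1 : c < m := by simp only [hm]; linarith
    have hm2 : m < c' := by simp only [hm]; linarith
    have hc0 : essInf f μ ≤ c := hc
    have hA : μ {x | f x < m} ≠ 0 := hpos m (by linarith)
    have hAm : MeasurableSet {x | f x < m} := measurableSet_lt hfm measurable_const
    have hind : ∀ x, ({x | f x < m}).indicator (fun _ => c' - m) x
        ≤ max c' (f x) - max c (f x) := by
      intro x
      by_cases hx : f x < m
      · rw [Set.indicator_apply, if_pos (Set.mem_setOf_eq ▸ hx)]
        have h1 : max c (f x) ≤ m := max_le hm1.le hx.le
        have h2 : max c' (f x) = c' := max_eq_left (hx.le.trans hm2.le)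
        linarith
      · rw [Set.indicator_apply, if_neg (by simpa using hx)]
        have : max c (f x) ≤ max c' (f x) := max_le_max hlt.le le_rfl
        linarith
    have hii : Integrable (({x | f x < m}).indicator (fun _ => c' - m)) μ :=
      (integrable_const (c' - m)).indicator hAm
    have hkey := integral_mono hii ((hint c').sub (hint c)) hind
    simp only [Pi.sub_apply] at hkey
    rw [integral_indicator_const _ hAm, integral_sub (hint c') (hint c)] at hkey
    have hμpos : 0 < (μ {x | f x < m}).toReal :=
      ENNReal.toReal_pos hA (measure_ne_top μ _)
    have : 0 < (μ {x | f x < m}).toReal • (c' - m) :=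
      smul_pos hμpos (by linarith)
    have hkey' : (μ {x | f x < m}).toReal • (c' - m) ≤ _ := hkey
    linarith
  -- value at essInf
  have heq : waterPhi μ f (essInf f μ) = ∫ x, f x ∂μ := by
    rw [hrw]
    apply integral_congr_ae
    filter_upwards [ae_essInf_le hbelow] with x hx
    exact max_eq_right hx
  -- tendsto atTop
  have htop : Tendsto (waterPhi μ f) atTop atTop := by
    apply tendsto_atTop_mono (fun c => ?_) tendsto_id
    show (c : ℝ) ≤ waterPhi μ f c
    rw [hrw]
    calc (c : ℝ) = ∫ _x, c ∂μ := by simp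
      _ ≤ ∫ x, max c (f x) ∂μ :=
          integral_mono (integrable_const c) (hint c) fun x => le_max_left _ _
  refine ⟨hlip.continuous.continuousOn, hmono, heq, htop, ?_⟩
  intro w hw
  obtain ⟨b, hb1, hb2⟩ :=
    ((htop.eventually_ge_atTop w).and (eventually_ge_atTop (essInf f μ))).exists
  have hIcc : w ∈ Icc (waterPhi μ f (essInf f μ)) (waterPhi μ f b) :=
    ⟨heq ▸ hw, hb1⟩
  obtain ⟨c, hc, hcw⟩ :=
    intermediate_value_Icc hb2 (hlip.continuous.continuousOn) hIcc
  refine ⟨c, ⟨hc.1, hcw⟩, ?_⟩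
  rintro c' ⟨hc', hcw'⟩
  exact hmono.injOn hc' hc.1 (hcw'.trans hcw.symm)
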